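/- Let ε = 1 or ε = -1, let b, c : ℝ → ℝ and ξ : ℝ → ℝ be smooth, and let η : ℝ → ℝ be smooth with η(t) ≠ 0 for all t. Suppose F : ℝ × ℝ → ℝ is a smooth function of (z,t) satisfying the reduced equation ∂z(∂t F + F ∂z F + ∂z² F) + ε (ξ(t)²/η(t)²) ∂z² F + (1/2)(η'(t)/η(t) − b(t)) ∂z F − 2 c(t) ε + (1/2)(b'(t) + b(t)² − η''(t)/η(t)) = 0 for all (z,t). Then the function u(x,y,t) := (−c(t) + (ε/4)(b'(t) + b(t)² − η''(t)/η(t))) y² + (ξ'(t)/η(t)) y + F(z(x,y,t), t), where z(x,y,t) := x + (ε/4)(η'(t)/η(t) − b(t)) y² − (ξ(t)/η(t)) y, satisfies ∂x(∂t u + u ∂x u + ∂x² u) + ε ∂y² u + b(t) y ∂x ∂y u + c(t) y² ∂x² u = 0 for all (x,y,t). -/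

import Mathlib

/-- Partial derivative in the first (`x`) variable. -/
noncomputable def pdx (u : ℝ → ℝ → ℝ → ℝ) : ℝ → ℝ → ℝ → ℝ :=
  fun x y t => deriv (fun s => u s y t) x

/-- Partial derivative in the second (`y`) variable. -/
noncomputable def pdy (u : ℝ → ℝ → ℝ → ℝ) : ℝ → ℝ → ℝ → ℝ :=
  fun x y t => deriv (fun s => u x s t) y

/-- Partial derivative in the third (`t`) variable. -/
noncomputable def pdt (u : ℝ → ℝ → ℝ → ℝ) : ℝ → ℝ → ℝ → ℝ :=
  fun x y t => deriv (fun s => u x y s) t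

/-- Partial derivative of a function of two variables `(z,t)` in the first variable `z`. -/
noncomputable def pz (F : ℝ → ℝ → ℝ) : ℝ → ℝ → ℝ :=
  fun z t => deriv (fun s => F s t) z

/-- Partial derivative of a function of two variables `(z,t)` in the second variable `t`. -/
noncomputable def pt (F : ℝ → ℝ → ℝ) : ℝ → ℝ → ℝ :=
  fun z t => deriv (fun s => F z s) t

section helpers

variable {F : ℝ → ℝ → ℝ}

lemma hasDerivAt_pz (hF : ContDiff ℝ (⊤ : ℕ∞) (fun p : ℝ × ℝ => F p.1 p.2)) (z t : ℝ) :
    HasDerivAt (fun s => F s t) (pz F z t) z := by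
  have hd : Differentiable ℝ (fun s : ℝ => F s t) := by
    have h : ContDiff ℝ (⊤ : ℕ∞) (fun s : ℝ => F s t) :=
      hF.comp (contDiff_id.prodMk contDiff_const)
    exact h.differentiable (by simp)
  exact (hd z).hasDerivAt

lemma hasDerivAt_pt (hF : ContDiff ℝ (⊤ : ℕ∞) (fun p : ℝ × ℝ => F p.1 p.2)) (z t : ℝ) :
    HasDerivAt (fun s => F z s) (pt F z t) t := by
  have hd : Differentiable ℝ (fun s : ℝ => F z s) := by
    have h : ContDiff ℝ (⊤ : ℕ∞) (fun s : ℝ => F z s) :=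
      hF.comp (contDiff_const.prodMk contDiff_id)
    exact h.differentiable (by simp)
  exact (hd t).hasDerivAt

lemma pz_eq_fderiv (hF : ContDiff ℝ (⊤ : ℕ∞) (fun p : ℝ × ℝ => F p.1 p.2)) (z t : ℝ) :
    pz F z t = fderiv ℝ (fun p : ℝ × ℝ => F p.1 p.2) (z, t) (1, 0) := by
  have hG := (hF.differentiable (by simp) (z, t)).hasFDerivAt
  have hc : HasDerivAt (fun s : ℝ => ((s, t) : ℝ × ℝ)) (1, 0) z :=
    (hasDerivAt_id z).prodMk (hasDerivAt_const z t)
  have h := HasFDerivAt.comp_hasDerivAt (f := fun s : ℝ => ((s, t) : ℝ × ℝ)) z hG hc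
  exact h.deriv

lemma pt_eq_fderiv (hF : ContDiff ℝ (⊤ : ℕ∞) (fun p : ℝ × ℝ => F p.1 p.2)) (z t : ℝ) :
    pt F z t = fderiv ℝ (fun p : ℝ × ℝ => F p.1 p.2) (z, t) (0, 1) := by
  have hG := (hF.differentiable (by simp) (z, t)).hasFDerivAt
  have hc : HasDerivAt (fun s : ℝ => ((z, s) : ℝ × ℝ)) (0, 1) t :=
    (hasDerivAt_const t z).prodMk (hasDerivAt_id t)
  have h := HasFDerivAt.comp_hasDerivAt (f := fun s : ℝ => ((z, s) : ℝ × ℝ)) t hG hc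
  exact h.deriv

lemma contDiff_pz (hF : ContDiff ℝ (⊤ : ℕ∞) (fun p : ℝ × ℝ => F p.1 p.2)) :
    ContDiff ℝ (⊤ : ℕ∞) (fun p : ℝ × ℝ => pz F p.1 p.2) := by
  have h1 : ContDiff ℝ (⊤ : ℕ∞)
      (fun p : ℝ × ℝ => fderiv ℝ (fun q : ℝ × ℝ => F q.1 q.2) p ((1 : ℝ), (0 : ℝ))) :=
    (hF.fderiv_right (mod_cast le_top)).clm_apply contDiff_const
  have he : (fun p : ℝ × ℝ => pz F p.1 p.2)
      = fun p : ℝ × ℝ => fderiv ℝ (fun q : ℝ × ℝ => F q.1 q.2) p ((1 : ℝ), (0 : ℝ)) :=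
    funext fun p => pz_eq_fderiv hF p.1 p.2
  rw [he]; exact h1

lemma contDiff_pt (hF : ContDiff ℝ (⊤ : ℕ∞) (fun p : ℝ × ℝ => F p.1 p.2)) :
    ContDiff ℝ (⊤ : ℕ∞) (fun p : ℝ × ℝ => pt F p.1 p.2) := by
  have h1 : ContDiff ℝ (⊤ : ℕ∞)
      (fun p : ℝ × ℝ => fderiv ℝ (fun q : ℝ × ℝ => F q.1 q.2) p ((0 : ℝ), (1 : ℝ))) :=
    (hF.fderiv_right (mod_cast le_top)).clm_apply contDiff_const
  have he : (fun p : ℝ × ℝ => pt F p.1 p.2)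
      = fun p : ℝ × ℝ => fderiv ℝ (fun q : ℝ × ℝ => F q.1 q.2) p ((0 : ℝ), (1 : ℝ)) :=
    funext fun p => pt_eq_fderiv hF p.1 p.2
  rw [he]; exact h1

lemma hasDerivAt_comp_curve (hF : ContDiff ℝ (⊤ : ℕ∞) (fun p : ℝ × ℝ => F p.1 p.2))
    {γ : ℝ → ℝ} {γ' : ℝ} {s : ℝ} (hγ : HasDerivAt γ γ' s) :
    HasDerivAt (fun r => F (γ r) r) (pz F (γ s) s * γ' + pt F (γ s) s) s := by
  have hG := (hF.differentiable (by simp) ((γ s), s)).hasFDerivAt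
  have hc : HasDerivAt (fun r : ℝ => ((γ r, r) : ℝ × ℝ)) (γ', 1) s :=
    hγ.prodMk (hasDerivAt_id s)
  have h : HasDerivAt (fun r => F (γ r) r)
      (fderiv ℝ (fun p : ℝ × ℝ => F p.1 p.2) (γ s, s) (γ', 1)) s :=
    HasFDerivAt.comp_hasDerivAt (f := fun r : ℝ => ((γ r, r) : ℝ × ℝ)) s hG hc
  convert h using 1
  rw [pz_eq_fderiv hF, pt_eq_fderiv hF]
  have he : ((γ', (1 : ℝ)) : ℝ × ℝ) = γ' • ((1 : ℝ), (0 : ℝ)) + ((0 : ℝ), (1 : ℝ)) := by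
    simp [Prod.ext_iff]
  rw [he, map_add, map_smul]
  simp [smul_eq_mul]
  ring

lemma hasDerivAt_shift2 (hF : ContDiff ℝ (⊤ : ℕ∞) (fun p : ℝ × ℝ => F p.1 p.2))
    (k1 k2 t x : ℝ) :
    HasDerivAt (fun s => F (s + k1 - k2) t) (pz F (x + k1 - k2) t) x := by
  have h := (hasDerivAt_pz hF (x + k1 - k2) t).comp x
    (((hasDerivAt_id x).add_const k1).sub_const k2)
  simpa [Function.comp_def] using h

lemma hasDerivAt_quad (hF : ContDiff ℝ (⊤ : ℕ∞) (fun p : ℝ × ℝ => F p.1 p.2))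
    (k a m t y : ℝ) :
    HasDerivAt (fun s => F (k + a * s ^ 2 - m * s) t)
      (pz F (k + a * y ^ 2 - m * y) t * (a * (2 * y) - m)) y := by
  have hγ : HasDerivAt (fun s : ℝ => k + a * s ^ 2 - m * s) (a * (2 * y) - m) y := by
    have h1 : HasDerivAt (fun s : ℝ => s ^ 2) (2 * y) y := by
      simpa using hasDerivAt_pow 2 y
    have h2 := ((h1.const_mul a).const_add k).sub ((hasDerivAt_id y).const_mul m)
    simpa [Pi.sub_def] using h2
  exact (hasDerivAt_pz hF (k + a * y ^ 2 - m * y) t).comp y hγ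

end helpers

set_option maxHeartbeats 2000000 in
theorem stmt7 (ε : ℝ) (hε : ε = 1 ∨ ε = -1)
    (b c ξ : ℝ → ℝ)
    (hb : ContDiff ℝ (⊤ : ℕ∞) b) (hc : ContDiff ℝ (⊤ : ℕ∞) c)
    (hξ : ContDiff ℝ (⊤ : ℕ∞) ξ)
    (η : ℝ → ℝ) (hη : ContDiff ℝ (⊤ : ℕ∞) η) (hη0 : ∀ t, η t ≠ 0)
    (F : ℝ → ℝ → ℝ)
    (hF : ContDiff ℝ (⊤ : ℕ∞) (fun p : ℝ × ℝ => F p.1 p.2))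
    (hFeq : ∀ z t : ℝ,
      pz (fun z t => pt F z t + F z t * pz F z t + pz (pz F) z t) z t
        + ε * ((ξ t) ^ 2 / (η t) ^ 2) * pz (pz F) z t
        + 1 / 2 * (deriv η t / η t - b t) * pz F z t
        - 2 * c t * ε
        + 1 / 2 * (deriv b t + (b t) ^ 2 - deriv (deriv η) t / η t) = 0)
    (u : ℝ → ℝ → ℝ → ℝ)
    (hudef : ∀ x y t, u x y t =
      (-c t + ε / 4 * (deriv b t + (b t) ^ 2 - deriv (deriv η) t / η t)) * y ^ 2
        + deriv ξ t / η t * y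
        + F (x + ε / 4 * (deriv η t / η t - b t) * y ^ 2 - ξ t / η t * y) t) :
    ∀ x y t : ℝ,
      pdx (fun x y t => pdt u x y t + u x y t * pdx u x y t + pdx (pdx u) x y t) x y t
        + ε * pdy (pdy u) x y t + b t * y * pdx (pdy u) x y t
        + c t * y ^ 2 * pdx (pdx u) x y t = 0 := by
  -- basic differentiability facts
  have hηd : ContDiff ℝ (⊤ : ℕ∞) (deriv η) := (contDiff_infty_iff_deriv.mp hη).2
  have hηdd : ContDiff ℝ (⊤ : ℕ∞) (deriv (deriv η)) := (contDiff_infty_iff_deriv.mp hηd).2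
  have hbd : ContDiff ℝ (⊤ : ℕ∞) (deriv b) := (contDiff_infty_iff_deriv.mp hb).2
  have hξd : ContDiff ℝ (⊤ : ℕ∞) (deriv ξ) := (contDiff_infty_iff_deriv.mp hξ).2
  have Dη : Differentiable ℝ η := hη.differentiable (by simp)
  have Dηd : Differentiable ℝ (deriv η) := hηd.differentiable (by simp)
  have Dηdd : Differentiable ℝ (deriv (deriv η)) := hηdd.differentiable (by simp)
  have Db : Differentiable ℝ b := hb.differentiable (by simp)
  have Dbd : Differentiable ℝ (deriv b) := hbd.differentiable (by simp)
  have Dc : Differentiable ℝ c := hc.differentiable (by simp)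
  have Dξ : Differentiable ℝ ξ := hξ.differentiable (by simp)
  have Dξd : Differentiable ℝ (deriv ξ) := hξd.differentiable (by simp)
  -- abbreviations
  set P : ℝ → ℝ := fun t => -c t + ε / 4 * (deriv b t + (b t) ^ 2 - deriv (deriv η) t / η t)
    with hP
  set Q : ℝ → ℝ := fun t => deriv ξ t / η t with hQ
  set A : ℝ → ℝ := fun t => ε / 4 * (deriv η t / η t - b t) with hA
  set Z : ℝ → ℝ → ℝ → ℝ := fun x y t => x + A t * y ^ 2 - ξ t / η t * y with hZ
  set dA : ℝ → ℝ := fun t =>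
    ε / 4 * ((deriv (deriv η) t * η t - deriv η t * deriv η t) / η t ^ 2 - deriv b t) with hdA
  set dB : ℝ → ℝ := fun t => (deriv ξ t * η t - ξ t * deriv η t) / η t ^ 2 with hdB
  have hu : ∀ x y t, u x y t = P t * y ^ 2 + Q t * y + F (Z x y t) t := by
    intro x y t
    rw [hudef x y t]
  have hPdiff : Differentiable ℝ P := by
    rw [hP]
    exact Dc.neg.add (((Dbd.add (Db.pow 2)).sub (Dηdd.div Dη hη0)).const_mul (ε / 4))
  have hQdiff : Differentiable ℝ Q := by
    rw [hQ]
    exact Dξd.div Dη hη0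
  have hAd : ∀ t, HasDerivAt A (dA t) t := by
    intro t
    rw [hA, hdA]
    exact (((Dηd t).hasDerivAt.div (Dη t).hasDerivAt (hη0 t)).sub
      (Db t).hasDerivAt).const_mul (ε / 4)
  have hBd : ∀ t, HasDerivAt (fun s => ξ s / η s) (dB t) t := by
    intro t
    rw [hdB]
    exact (Dξ t).hasDerivAt.div (Dη t).hasDerivAt (hη0 t)
  -- first derivatives
  have h1 : ∀ x y t, pdx u x y t = pz F (Z x y t) t := by
    intro x y t
    show deriv (fun s => u s y t) x = _
    simp only [hu]
    exact ((hasDerivAt_shift2 hF (A t * y ^ 2) (ξ t / η t * y) t x).const_add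
      (P t * y ^ 2 + Q t * y)).deriv
  have h2 : ∀ x y t, pdx (pdx u) x y t = pz (pz F) (Z x y t) t := by
    intro x y t
    show deriv (fun s => pdx u s y t) x = _
    simp only [h1]
    exact (hasDerivAt_shift2 (contDiff_pz hF) (A t * y ^ 2) (ξ t / η t * y) t x).deriv
  have h4 : ∀ x y t, pdy u x y t
      = P t * (2 * y) + Q t + pz F (Z x y t) t * (A t * (2 * y) - ξ t / η t) := by
    intro x y t
    show deriv (fun s => u x s t) y = _
    simp only [hu]
    have hP2 : HasDerivAt (fun s : ℝ => P t * s ^ 2 + Q t * s) (P t * (2 * y) + Q t) y := by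
      have hsq : HasDerivAt (fun s : ℝ => s ^ 2) (2 * y) y := by
        simpa using hasDerivAt_pow 2 y
      simpa [Pi.add_def] using (hsq.const_mul (P t)).add ((hasDerivAt_id y).const_mul (Q t))
    exact (hP2.add (hasDerivAt_quad hF x (A t) (ξ t / η t) t y)).deriv
  have h5 : ∀ x y t, pdy (pdy u) x y t
      = P t * 2 + (pz (pz F) (Z x y t) t * (A t * (2 * y) - ξ t / η t) * (A t * (2 * y) - ξ t / η t)
          + pz F (Z x y t) t * (A t * 2)) := by
    intro x y t
    show deriv (fun s => pdy u x s t) y = _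
    simp only [h4]
    have hlin1 : HasDerivAt (fun s : ℝ => P t * (2 * s) + Q t) (P t * 2) y := by
      simpa using (((hasDerivAt_id y).const_mul 2).const_mul (P t)).add_const (Q t)
    have hlin2 : HasDerivAt (fun s : ℝ => A t * (2 * s) - ξ t / η t) (A t * 2) y := by
      simpa using (((hasDerivAt_id y).const_mul 2).const_mul (A t)).sub_const (ξ t / η t)
    have hprod := (hasDerivAt_quad (contDiff_pz hF) x (A t) (ξ t / η t) t y).mul hlin2
    exact (hlin1.add hprod).deriv
  have h6 : ∀ x y t, pdx (pdy u) x y t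
      = pz (pz F) (Z x y t) t * (A t * (2 * y) - ξ t / η t) := by
    intro x y t
    show deriv (fun s => pdy u s y t) x = _
    simp only [h4]
    exact (((hasDerivAt_shift2 (contDiff_pz hF) (A t * y ^ 2) (ξ t / η t * y) t x).mul_const
      (A t * (2 * y) - ξ t / η t)).const_add (P t * (2 * y) + Q t)).deriv
  have hpdt : ∀ x y t, pdt u x y t
      = (deriv P t * y ^ 2 + deriv Q t * y)
        + (pz F (Z x y t) t * (dA t * y ^ 2 - dB t * y) + pt F (Z x y t) t) := by
    intro x y t
    show deriv (fun s => u x y s) t = _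
    simp only [hu]
    have hPQ : HasDerivAt (fun s : ℝ => P s * y ^ 2 + Q s * y)
        (deriv P t * y ^ 2 + deriv Q t * y) t :=
      ((hPdiff t).hasDerivAt.mul_const (y ^ 2)).add ((hQdiff t).hasDerivAt.mul_const y)
    have hγ : HasDerivAt (fun s => Z x y s) (dA t * y ^ 2 - dB t * y) t := by
      rw [hZ]
      exact (((hAd t).mul_const (y ^ 2)).const_add x).sub ((hBd t).mul_const y)
    have hcomp := hasDerivAt_comp_curve hF hγ
    exact (hPQ.add hcomp).deriv
  have hKey : ∀ z t, pz (fun z t => pt F z t + F z t * pz F z t + pz (pz F) z t) z t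
      = pz (pt F) z t + (pz F z t * pz F z t + F z t * pz (pz F) z t)
        + pz (pz (pz F)) z t := by
    intro z t
    show deriv (fun s => pt F s t + F s t * pz F s t + pz (pz F) s t) z = _
    exact (((hasDerivAt_pz (contDiff_pt hF) z t).add
      ((hasDerivAt_pz hF z t).mul (hasDerivAt_pz (contDiff_pz hF) z t))).add
      (hasDerivAt_pz (contDiff_pz (contDiff_pz hF)) z t)).deriv
  have h7 : ∀ x y t,
      pdx (fun x y t => pdt u x y t + u x y t * pdx u x y t + pdx (pdx u) x y t) x y t
      = (pz (pz F) (Z x y t) t * (dA t * y ^ 2 - dB t * y) + pz (pt F) (Z x y t) t)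
        + (pz F (Z x y t) t * pz F (Z x y t) t
            + (P t * y ^ 2 + Q t * y + F (Z x y t) t) * pz (pz F) (Z x y t) t)
        + pz (pz (pz F)) (Z x y t) t := by
    intro x y t
    show deriv (fun s => pdt u s y t + u s y t * pdx u s y t + pdx (pdx u) s y t) x = _
    simp only [hpdt, hu, h1, h2]
    have ha := (hasDerivAt_shift2 (contDiff_pz hF) (A t * y ^ 2) (ξ t / η t * y) t x).mul_const
      (dA t * y ^ 2 - dB t * y)
    have hbb := hasDerivAt_shift2 (contDiff_pt hF) (A t * y ^ 2) (ξ t / η t * y) t x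
    have hT1 := (ha.add hbb).const_add (deriv P t * y ^ 2 + deriv Q t * y)
    have hT2 := ((hasDerivAt_shift2 hF (A t * y ^ 2) (ξ t / η t * y) t x).const_add
      (P t * y ^ 2 + Q t * y)).mul
      (hasDerivAt_shift2 (contDiff_pz hF) (A t * y ^ 2) (ξ t / η t * y) t x)
    have hT3 := hasDerivAt_shift2 (contDiff_pz (contDiff_pz hF)) (A t * y ^ 2)
      (ξ t / η t * y) t x
    exact ((hT1.add hT2).add hT3).deriv
  -- assemble
  intro x y t
  have key := hFeq (Z x y t) t
  rw [hKey] at key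
  rw [h7, h5, h6, h2]
  have ha4 : pz (pt F) (Z x y t) t =
      -((pz F (Z x y t) t * pz F (Z x y t) t + F (Z x y t) t * pz (pz F) (Z x y t) t)
        + pz (pz (pz F)) (Z x y t) t
        + ε * ((ξ t) ^ 2 / (η t) ^ 2) * pz (pz F) (Z x y t) t
        + 1 / 2 * (deriv η t / η t - b t) * pz F (Z x y t) t
        - 2 * c t * ε
        + 1 / 2 * (deriv b t + (b t) ^ 2 - deriv (deriv η) t / η t)) := by
    linear_combination key
  rw [ha4]
  simp only [hP, hQ, hA, hdA, hdB]
  have hne := hη0 t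
  rcases hε with rfl | rfl <;> field_simp <;> ring
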